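/- Fix a > 0 and x₂ > 0. The function x₁ ↦ exp(−V_a(x₁, x₂)) has derivative exp(−V_a(x₁,x₂))·Φ(a/2 − (1/a)·log(x₁/x₂))/x₁² at each x₁ > 0, and is strictly increasing on (0, ∞); i.e., the bivariate Brown–Resnick distribution function is strictly increasing in each argument. -/

import Mathlib

open Real MeasureTheory Filter Topology

/-- The standard normal density φ(t) = (2π)^{-1/2} e^{-t²/2}. -/
noncomputable def stdNormalPDF (t : ℝ) : ℝ :=
  (Real.sqrt (2 * Real.pi))⁻¹ * Real.exp (-t ^ 2 / 2)

/-- The standard normal cumulative distribution function Φ. -/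
noncomputable def stdNormalCDF (t : ℝ) : ℝ :=
  ∫ u in Set.Iic t, stdNormalPDF u

/-- The bivariate Brown–Resnick exponent measure V_a(x₁, x₂). -/
noncomputable def brV (a x₁ x₂ : ℝ) : ℝ :=
  (1 / x₁) * stdNormalCDF (a / 2 - (1 / a) * Real.log (x₁ / x₂)) +
    (1 / x₂) * stdNormalCDF (a / 2 - (1 / a) * Real.log (x₂ / x₁))

lemma stdNormalPDF_pos (t : ℝ) : 0 < stdNormalPDF t := by
  unfold stdNormalPDF
  positivity

lemma continuous_stdNormalPDF : Continuous stdNormalPDF := by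
  unfold stdNormalPDF
  continuity

lemma integrable_stdNormalPDF : Integrable stdNormalPDF := by
  have h : Integrable (fun t : ℝ => Real.exp (-(1/2 : ℝ) * t ^ 2)) :=
    integrable_exp_neg_mul_sq (by norm_num)
  have h2 := h.const_mul (Real.sqrt (2 * Real.pi))⁻¹
  apply h2.congr
  filter_upwards with t
  unfold stdNormalPDF
  ring_nf

lemma hasDerivAt_stdNormalCDF (t : ℝ) :
    HasDerivAt stdNormalCDF (stdNormalPDF t) t := by
  have key : ∀ s : ℝ, stdNormalCDF s = stdNormalCDF 0 + ∫ u in (0:ℝ)..s, stdNormalPDF u := by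
    intro s
    have h := intervalIntegral.integral_Iic_sub_Iic
      (integrable_stdNormalPDF.integrableOn (s := Set.Iic 0))
      (integrable_stdNormalPDF.integrableOn (s := Set.Iic s)) (μ := volume)
    unfold stdNormalCDF
    linarith [h]
  have h : HasDerivAt (fun s => stdNormalCDF 0 + ∫ u in (0:ℝ)..s, stdNormalPDF u)
      (stdNormalPDF t) t := by
    refine HasDerivAt.const_add _ ?_
    exact intervalIntegral.integral_hasDerivAt_right
      (integrable_stdNormalPDF.intervalIntegrable)
      (continuous_stdNormalPDF.stronglyMeasurableAtFilter _ _)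
      continuous_stdNormalPDF.continuousAt
  exact h.congr_of_eventuallyEq (by filter_upwards with s using (key s))

lemma stdNormalCDF_pos (t : ℝ) : 0 < stdNormalCDF t := by
  unfold stdNormalCDF
  apply setIntegral_pos_iff_support_of_nonneg_ae ?_ ?_ |>.mpr
  · have : Function.support stdNormalPDF = Set.univ := by
      ext u; simp [(stdNormalPDF_pos u).ne']
    rw [this]
    simp
  · filter_upwards with u using (stdNormalPDF_pos u).le
  · exact integrable_stdNormalPDF.integrableOn

lemma pdf_identity (a x₁ x₂ : ℝ) (ha : 0 < a) (hx₁ : 0 < x₁) (hx₂ : 0 < x₂) :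
    (1 / x₂) * stdNormalPDF (a / 2 - (1 / a) * Real.log (x₂ / x₁)) =
      (1 / x₁) * stdNormalPDF (a / 2 - (1 / a) * Real.log (x₁ / x₂)) := by
  unfold stdNormalPDF
  have hL : Real.log (x₂ / x₁) = - Real.log (x₁ / x₂) := by
    rw [← Real.log_inv, inv_div]
  rw [hL]
  set L := Real.log (x₁ / x₂) with hLdef
  have hexp : Real.exp (-(a / 2 - (1 / a) * -L) ^ 2 / 2)
      = Real.exp (-(a / 2 - (1 / a) * L) ^ 2 / 2) * Real.exp (-L) := by
    rw [← Real.exp_add]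
    congr 1
    field_simp
    ring
  rw [hexp]
  have hexpL : Real.exp L = x₁ / x₂ := Real.exp_log (div_pos hx₁ hx₂)
  have : Real.exp (-L) = x₂ / x₁ := by
    rw [Real.exp_neg, hexpL, inv_div]
  rw [this]
  field_simp

lemma hasDerivAt_brV (a x₂ : ℝ) (ha : 0 < a) (hx₂ : 0 < x₂) (x₁ : ℝ) (hx₁ : 0 < x₁) :
    HasDerivAt (fun t => brV a t x₂)
      (-(stdNormalCDF (a / 2 - (1 / a) * Real.log (x₁ / x₂)) / x₁ ^ 2)) x₁ := by
  have hx₁' : x₁ ≠ 0 := hx₁.ne'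
  have hx₂' : x₂ ≠ 0 := hx₂.ne'
  have ha' : a ≠ 0 := ha.ne'
  -- derivative of t ↦ a/2 - (1/a) log (t/x₂)
  have hA : HasDerivAt (fun t : ℝ => a / 2 - (1 / a) * Real.log (t / x₂))
      (-(1 / a) * (1 / x₁)) x₁ := by
    have h1 : HasDerivAt (fun t : ℝ => t / x₂) (1 / x₂) x₁ := by
      simpa using (hasDerivAt_id x₁).div_const x₂
    have h2 := h1.log (div_ne_zero hx₁' hx₂')
    have h3 := (h2.const_mul (1 / a)).const_sub (a / 2)
    convert h3 using 1
    · rfl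
    · rfl
    field_simp
  -- derivative of t ↦ a/2 - (1/a) log (x₂/t)
  have hB : HasDerivAt (fun t : ℝ => a / 2 - (1 / a) * Real.log (x₂ / t))
      ((1 / a) * (1 / x₁)) x₁ := by
    have h1 : HasDerivAt (fun t : ℝ => x₂ / t) (-(x₂ / x₁ ^ 2)) x₁ := by
      have := (hasDerivAt_inv hx₁').const_mul x₂
      simpa [div_eq_mul_inv, mul_comm] using this
    have h2 := h1.log (div_ne_zero hx₂' hx₁')
    have h3 := (h2.const_mul (1 / a)).const_sub (a / 2)
    convert h3 using 1
    · rfl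
    · rfl
    field_simp
  have hΦA := (hasDerivAt_stdNormalCDF (a / 2 - (1 / a) * Real.log (x₁ / x₂))).comp x₁ hA
  have hΦB := (hasDerivAt_stdNormalCDF (a / 2 - (1 / a) * Real.log (x₂ / x₁))).comp x₁ hB
  have hinv : HasDerivAt (fun t : ℝ => 1 / t) (-(1 / x₁ ^ 2)) x₁ := by
    simpa [one_div] using hasDerivAt_inv hx₁'
  have hT1 := hinv.mul hΦA
  have hT2 := hΦB.const_mul (1 / x₂)
  have hsum := hT1.add hT2
  have : HasDerivAt (fun t => brV a t x₂)
      (-(1 / x₁ ^ 2) * stdNormalCDF (a / 2 - (1 / a) * Real.log (x₁ / x₂))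
        + 1 / x₁ * (stdNormalPDF (a / 2 - (1 / a) * Real.log (x₁ / x₂)) * (-(1 / a) * (1 / x₁)))
        + 1 / x₂ * (stdNormalPDF (a / 2 - (1 / a) * Real.log (x₂ / x₁)) * ((1 / a) * (1 / x₁)))) x₁ := by
    unfold brV
    exact hsum
  convert this using 1
  have hid := pdf_identity a x₁ x₂ ha hx₁ hx₂
  rw [show (1:ℝ) / x₂ * (stdNormalPDF (a / 2 - (1 / a) * Real.log (x₂ / x₁)) * ((1 / a) * (1 / x₁)))
      = ((1 / x₂) * stdNormalPDF (a / 2 - (1 / a) * Real.log (x₂ / x₁))) * ((1 / a) * (1 / x₁)) by ring,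
    hid]
  field_simp
  ring

theorem stmt9 (a x₂ : ℝ) (ha : 0 < a) (hx₂ : 0 < x₂) :
    (∀ x₁ : ℝ, 0 < x₁ →
      HasDerivAt (fun t => Real.exp (-brV a t x₂))
        (Real.exp (-brV a x₁ x₂) *
          stdNormalCDF (a / 2 - (1 / a) * Real.log (x₁ / x₂)) / x₁ ^ 2) x₁) ∧
    StrictMonoOn (fun x₁ => Real.exp (-brV a x₁ x₂)) (Set.Ioi 0) := by
  have hderiv : ∀ x₁ : ℝ, 0 < x₁ →
      HasDerivAt (fun t => Real.exp (-brV a t x₂))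
        (Real.exp (-brV a x₁ x₂) *
          stdNormalCDF (a / 2 - (1 / a) * Real.log (x₁ / x₂)) / x₁ ^ 2) x₁ := by
    intro x₁ hx₁
    have h := ((hasDerivAt_brV a x₂ ha hx₂ x₁ hx₁).neg).exp
    convert h using 1
    · rfl
    simp only [Pi.neg_apply]
    ring
  refine ⟨hderiv, ?_⟩
  have hpos : ∀ x₁ : ℝ, 0 < x₁ →
      0 < Real.exp (-brV a x₁ x₂) *
        stdNormalCDF (a / 2 - (1 / a) * Real.log (x₁ / x₂)) / x₁ ^ 2 := by
    intro x₁ hx₁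
    have := stdNormalCDF_pos (a / 2 - (1 / a) * Real.log (x₁ / x₂))
    positivity
  apply strictMonoOn_of_deriv_pos (convex_Ioi 0)
  · intro x hx
    exact ((hderiv x hx).differentiableAt.continuousAt).continuousWithinAt
  · intro x hx
    rw [interior_Ioi] at hx
    rw [(hderiv x hx).deriv]
    exact hpos x hx
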